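/- Let S be a finitely generated subsemigroup of Z^n. Let G(S) be the group generated by S and Con(S) the smallest closed convex cone in R^n containing S. Then there exists an element g0 in S such that for every g in G(S) ∩ Con(S), the element g + g0 belongs to S. -/

import Mathlib

open Filter Topology



/-- The smallest closed convex cone (with apex at the origin) containing a set `T`:
the closure of the set of all nonnegative linear combinations of elements of `T`. -/
def coneGen {V : Type*} [AddCommGroup V] [Module ℝ V] [TopologicalSpace V]
    (T : Set V) : Set V :=
  closure {x | ∃ (s : Finset V) (c : V → ℝ),
    (s : Set V) ⊆ T ∧ (∀ v ∈ s, 0 ≤ c v) ∧ x = ∑ v ∈ s, c v • v}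

/-- The coercion of an integral point of `ℤ^n` into `ℝ^n`. -/
def intCastVec {n : ℕ} (x : Fin n → ℤ) : Fin n → ℝ := fun i => (x i : ℝ)

/-- A nonempty sum of elements of an `AddSubsemigroup` is in the subsemigroup. -/
lemma sum_mem_addSubsemigroup {M ι : Type*} [AddCommMonoid M] (S : AddSubsemigroup M)
    {s : Finset ι} (hs : s.Nonempty) {f : ι → M} (h : ∀ x ∈ s, f x ∈ S) :
    ∑ x ∈ s, f x ∈ S := by
  induction hs using Finset.Nonempty.cons_induction with
  | singleton a => simpa using h a (by simp)
  | cons a s ha hs ih =>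
    rw [Finset.sum_cons]
    exact S.add_mem (h a (by simp)) (ih fun x hx => h x (Finset.mem_cons_of_mem hx))

/-- A not-all-zero natural combination of elements of `S` lies in `S`. -/
lemma nsmul_combo_mem {M : Type*} [AddCommMonoid M] (S : AddSubsemigroup M)
    (A : Finset M) (hA : ∀ a ∈ A, a ∈ S) :
    ∀ (N : ℕ) (m : M → ℕ), (∑ a ∈ A, m a = N) → (∃ a ∈ A, m a ≠ 0) →
      ∑ a ∈ A, m a • a ∈ S := by
  intro N
  induction N using Nat.strong_induction_on with
  | _ N ih =>
    rintro m hN ⟨a₀, ha₀A, ha₀⟩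
    classical
    set m' : M → ℕ := Function.update m a₀ (m a₀ - 1) with hm'
    have key : ∑ a ∈ A, m a • a = a₀ + ∑ a ∈ A, m' a • a := by
      rw [← Finset.add_sum_erase A (fun a => m a • a) ha₀A,
          ← Finset.add_sum_erase A (fun a => m' a • a) ha₀A]
      have h1 : ∀ a ∈ A.erase a₀, m' a • a = m a • a := by
        intro a ha
        rw [hm', Function.update_of_ne (Finset.ne_of_mem_erase ha)]
      rw [Finset.sum_congr rfl h1]
      have : m a₀ = (m a₀ - 1) + 1 := (Nat.succ_pred_eq_of_pos (Nat.pos_of_ne_zero ha₀)).symm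
      rw [hm']
      simp only [Function.update_self]
      rw [this]
      rw [add_nsmul, one_nsmul]
      abel_nf
      ac_rfl
    clear_value m'
    rw [key]
    by_cases hz : ∃ a ∈ A, m' a ≠ 0
    · have hNpos : 0 < N := by
        rw [← hN]
        exact Finset.sum_pos' (fun a _ => Nat.zero_le _) ⟨a₀, ha₀A, Nat.pos_of_ne_zero ha₀⟩
      have hsum' : ∑ a ∈ A, m' a = N - 1 := by
        rw [← Finset.add_sum_erase A m ha₀A] at hN
        rw [← Finset.add_sum_erase A m' ha₀A]
        have h1 : ∀ a ∈ A.erase a₀, m' a = m a := by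
          intro a ha
          rw [hm', Function.update_of_ne (Finset.ne_of_mem_erase ha)]
        rw [Finset.sum_congr rfl h1, hm']
        simp only [Function.update_self]
        have := Nat.pos_of_ne_zero ha₀
        have hc : (A.erase a₀).sum m = ∑ x ∈ A.erase a₀, m x := rfl
        omega
      exact S.add_mem (hA a₀ ha₀A) (ih (N - 1) (by omega) m' hsum' hz)
    · push_neg at hz
      have : ∑ a ∈ A, m' a • a = 0 := by
        apply Finset.sum_eq_zero
        intro a ha
        rw [hz a ha, zero_nsmul]
      rw [this, add_zero]
      exact hA a₀ ha₀A

/-- Every element of the subsemigroup closure of a finset is a not-all-zero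
natural combination. -/
lemma mem_closure_combo {M : Type*} [AddCommMonoid M] (A : Finset M) {x : M}
    (hx : x ∈ AddSubsemigroup.closure (A : Set M)) :
    ∃ m : M → ℕ, (∃ a ∈ A, m a ≠ 0) ∧ x = ∑ a ∈ A, m a • a := by
  classical
  induction hx using AddSubsemigroup.closure_induction with
  | mem x hxA =>
    refine ⟨fun a => if a = x then 1 else 0, ⟨x, hxA, by simp⟩, ?_⟩
    rw [Finset.sum_eq_single x (fun b _ hb => by simp [hb]) (fun hx' => absurd hxA hx')]
    simp
  | add x y hx hy ihx ihy =>
    obtain ⟨m₁, ⟨a₁, ha₁, hm₁⟩, hx'⟩ := ihx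
    obtain ⟨m₂, _, hy'⟩ := ihy
    refine ⟨m₁ + m₂, ⟨a₁, ha₁, by simp [hm₁]⟩, ?_⟩
    rw [hx', hy', ← Finset.sum_add_distrib]
    congr 1
    ext a
    simp [add_nsmul]

/-- if `S` is a finitely generated subsemigroup of `ℤ^n`, `G(S)` the group it
generates and `Con(S)` the smallest closed convex cone containing `S`, then there is
`g₀ ∈ S` with `g + g₀ ∈ S` for every `g ∈ G(S) ∩ Con(S)`. -/
theorem stmt0 {n : ℕ} (S : AddSubsemigroup (Fin n → ℤ))
    (hfg : ∃ A : Finset (Fin n → ℤ), A.Nonempty ∧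
      AddSubsemigroup.closure (A : Set (Fin n → ℤ)) = S) :
    ∃ g0 ∈ S, ∀ g : Fin n → ℤ,
      g ∈ AddSubgroup.closure (S : Set (Fin n → ℤ)) →
      intCastVec g ∈ coneGen (intCastVec '' (S : Set (Fin n → ℤ))) →
      g + g0 ∈ S := by
  classical
  obtain ⟨A, hAne, hAS⟩ := hfg
  obtain ⟨astar, hastar⟩ := hAne
  have hA_sub : (A : Set (Fin n → ℤ)) ⊆ S := by
    rw [← hAS]; exact AddSubsemigroup.subset_closure
  have hS_combo : ∀ x ∈ S, ∃ m : (Fin n → ℤ) → ℕ,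
      (∃ a ∈ A, m a ≠ 0) ∧ x = ∑ a ∈ A, m a • a := by
    intro x hx
    exact mem_closure_combo A (by rwa [hAS])
  have hcombo_mem : ∀ m : (Fin n → ℤ) → ℕ, (∃ a ∈ A, m a ≠ 0) →
      ∑ a ∈ A, m a • a ∈ S := by
    intro m hm
    have := nsmul_combo_mem (AddSubsemigroup.closure (A : Set (Fin n → ℤ))) A
      (fun a ha => AddSubsemigroup.subset_closure ha) (∑ a ∈ A, m a) m rfl hm
    rwa [hAS] at this
  have hS_span : (S : Set (Fin n → ℤ)) ⊆
      (Submodule.span ℤ (A : Set (Fin n → ℤ)) : Set (Fin n → ℤ)) := by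
    intro x hx
    obtain ⟨m, _, rfl⟩ := hS_combo x hx
    exact Submodule.sum_mem _ fun a ha => nsmul_mem (Submodule.subset_span ha) _
  have hG_span : AddSubgroup.closure (S : Set (Fin n → ℤ)) ≤
      (Submodule.span ℤ (A : Set (Fin n → ℤ))).toAddSubgroup :=
    (AddSubgroup.closure_le _).2 hS_span
  set Mb : Fin n → ℤ := fun i => ∑ a ∈ A, |a i| with hMb
  have hMb_nonneg : ∀ i, 0 ≤ Mb i := fun i =>
    Finset.sum_nonneg fun a _ => abs_nonneg _
  set F : Set (Fin n → ℤ) :=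
    {x | x ∈ AddSubgroup.closure (S : Set (Fin n → ℤ)) ∧ ∀ i, |x i| ≤ Mb i + 1} with hF
  have hFfin : F.Finite := by
    apply Set.Finite.subset (Set.Finite.pi
      (fun i => Set.finite_Icc (-(Mb i + 1)) (Mb i + 1)))
    intro x hx
    simp only [Set.mem_pi, Set.mem_univ, Set.mem_Icc, forall_true_left]
    intro i
    exact abs_le.1 (hx.2 i)
  have hts : ∀ f : Fin n → ℤ, ∃ tf, tf ∈ S ∧ (f ∈ F → f + tf ∈ S) := by
    intro f
    by_cases hf : f ∈ F
    · obtain ⟨z, -, hz⟩ := Submodule.mem_span_finset.1 (hG_span hf.1)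
      obtain ⟨c, hcpos, hc⟩ : ∃ c : ℕ, 0 < c ∧ ∀ a ∈ A, 1 ≤ z a + c := by
        refine ⟨(A.sup fun a => (z a).natAbs) + 1, Nat.succ_pos _, fun a ha => ?_⟩
        have h1 : (z a).natAbs ≤ A.sup fun a => (z a).natAbs :=
          Finset.le_sup (f := fun a => (z a).natAbs) ha
        omega
      refine ⟨∑ a ∈ A, (c : ℤ) • a, ?_, fun _ => ?_⟩
      · have hmem : ∑ a ∈ A, ((fun _ : Fin n → ℤ => c) a) • a ∈ S :=
          hcombo_mem _ ⟨astar, hastar, by omega⟩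
        simpa only [natCast_zsmul] using hmem
      · have heq : f + ∑ a ∈ A, (c : ℤ) • a
            = ∑ a ∈ A, ((z a + c).toNat) • a := by
          rw [← hz, ← Finset.sum_add_distrib]
          refine Finset.sum_congr rfl fun a ha => ?_
          have h1 : (((z a + c).toNat : ℤ)) = z a + c :=
            Int.toNat_of_nonneg (by have := hc a ha; omega)
          rw [← natCast_zsmul, h1, add_zsmul]
        rw [heq]
        refine hcombo_mem _ ⟨astar, hastar, ?_⟩
        have := hc astar hastar
        omega
    · refine ⟨∑ a ∈ A, ((fun _ : Fin n → ℤ => (1 : ℕ)) a) • a, ?_, fun h => absurd h hf⟩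
      exact hcombo_mem _ ⟨astar, hastar, one_ne_zero⟩
  choose t ht htF using hts
  have hFne : (0 : Fin n → ℤ) ∈ F :=
    ⟨AddSubgroup.zero_mem _, fun i => by
      simp only [Pi.zero_apply, abs_zero]
      have := hMb_nonneg i; omega⟩
  refine ⟨∑ f ∈ hFfin.toFinset, t f,
    sum_mem_addSubsemigroup S ⟨0, hFfin.mem_toFinset.2 hFne⟩ (fun f _ => ht f), ?_⟩
  intro g hgG hgC
  rw [coneGen, Metric.mem_closure_iff] at hgC
  obtain ⟨y, hy_mem, hy_dist⟩ := hgC 1 one_pos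
  obtain ⟨s, c, hs_sub, hc_nonneg, hy_eq⟩ := hy_mem
  have hv : ∀ v : Fin n → ℝ, ∃ mv : (Fin n → ℤ) → ℕ, v ∈ s →
      ∀ i, v i = ∑ a ∈ A, (mv a : ℝ) * (a i : ℝ) := by
    intro v
    by_cases hvs : v ∈ s
    · obtain ⟨x, hxS, hxv⟩ := hs_sub hvs
      obtain ⟨m, _, hxe⟩ := hS_combo x hxS
      refine ⟨m, fun _ i => ?_⟩
      have hxi : x i = ∑ a ∈ A, (m a : ℤ) * a i := by
        rw [hxe, Finset.sum_apply]
        exact Finset.sum_congr rfl fun a _ => by simp [nsmul_eq_mul]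
      rw [← hxv]
      show ((x i : ℝ)) = _
      rw [hxi]
      push_cast
      rfl
    · exact ⟨0, fun h => absurd h hvs⟩
  choose mv hmv using hv
  set d : (Fin n → ℤ) → ℝ := fun a => ∑ v ∈ s, c v * (mv v a : ℝ) with hd
  have hd_nonneg : ∀ a, 0 ≤ d a := fun a =>
    Finset.sum_nonneg fun v hv' => mul_nonneg (hc_nonneg v hv') (Nat.cast_nonneg _)
  have hy_coord : ∀ i, y i = ∑ a ∈ A, d a * (a i : ℝ) := by
    intro i
    rw [hy_eq, Finset.sum_apply]
    simp only [Pi.smul_apply, smul_eq_mul]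
    calc ∑ v ∈ s, c v * v i
        = ∑ v ∈ s, ∑ a ∈ A, c v * ((mv v a : ℝ) * (a i : ℝ)) := by
          refine Finset.sum_congr rfl fun v hv' => ?_
          rw [hmv v hv' i, Finset.mul_sum]
      _ = ∑ a ∈ A, ∑ v ∈ s, c v * ((mv v a : ℝ) * (a i : ℝ)) := Finset.sum_comm
      _ = ∑ a ∈ A, d a * (a i : ℝ) := by
          refine Finset.sum_congr rfl fun a _ => ?_
          rw [hd]
          simp only [Finset.sum_mul]
          refine Finset.sum_congr rfl fun v _ => by ring
  set k : (Fin n → ℤ) → ℕ := fun a => ⌊d a⌋₊ with hk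
  set g' : Fin n → ℤ := ∑ a ∈ A, (k a : ℤ) • a with hg'
  set f : Fin n → ℤ := g - g' with hf_def
  have hf_G : f ∈ AddSubgroup.closure (S : Set (Fin n → ℤ)) := by
    refine AddSubgroup.sub_mem _ hgG (AddSubgroup.sum_mem _ fun a ha => ?_)
    exact AddSubgroup.zsmul_mem _ (AddSubgroup.subset_closure (hA_sub ha)) _
  have hf_bound : ∀ i, |f i| ≤ Mb i + 1 := by
    intro i
    have h1 : |(g i : ℝ) - y i| < 1 := by
      have h2 := dist_le_pi_dist (intCastVec g) y i
      rw [Real.dist_eq] at h2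
      exact lt_of_le_of_lt h2 hy_dist
    have hfk : ∀ a, 0 ≤ d a - (k a : ℝ) ∧ d a - (k a : ℝ) ≤ 1 := by
      intro a
      constructor
      · have := Nat.floor_le (hd_nonneg a); simp only [hk]; linarith
      · have := Nat.lt_floor_add_one (d a); simp only [hk]; linarith
    have hfi : (f i : ℝ) = ((g i : ℝ) - y i) + ∑ a ∈ A, (d a - (k a : ℝ)) * (a i : ℝ) := by
      have hgi' : g' i = ∑ a ∈ A, (k a : ℤ) * a i := by
        rw [hg', Finset.sum_apply]
        simp [smul_eq_mul]
      have : f i = g i - ∑ a ∈ A, (k a : ℤ) * a i := by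
        rw [hf_def]; simp [hgi']
      rw [this, hy_coord i]
      push_cast
      have hsplit : ∑ a ∈ A, (d a - (k a : ℝ)) * (a i : ℝ)
          = ∑ a ∈ A, d a * (a i : ℝ) - ∑ a ∈ A, (k a : ℝ) * (a i : ℝ) := by
        rw [← Finset.sum_sub_distrib]
        exact Finset.sum_congr rfl fun a _ => by ring
      rw [hsplit]
      ring
    have h3 : |(f i : ℝ)| ≤ 1 + ∑ a ∈ A, |(a i : ℝ)| := by
      rw [hfi]
      refine (abs_add_le _ _).trans ?_
      have h4 : |∑ a ∈ A, (d a - (k a : ℝ)) * (a i : ℝ)| ≤ ∑ a ∈ A, |(a i : ℝ)| := by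
        refine (Finset.abs_sum_le_sum_abs _ _).trans ?_
        refine Finset.sum_le_sum fun a _ => ?_
        rw [abs_mul]
        have h5 := hfk a
        have h6 : |d a - (k a : ℝ)| ≤ 1 := abs_le.2 ⟨by linarith, h5.2⟩
        calc |d a - (k a : ℝ)| * |(a i : ℝ)| ≤ 1 * |(a i : ℝ)| :=
              mul_le_mul_of_nonneg_right h6 (abs_nonneg _)
          _ = |(a i : ℝ)| := one_mul _
      linarith [h1.le]
    have h7 : ((|f i| : ℤ) : ℝ) ≤ ((Mb i + 1 : ℤ) : ℝ) := by
      push_cast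
      rw [hMb]
      push_cast
      linarith [h3]
    exact_mod_cast h7
  have hfF : f ∈ F := ⟨hf_G, hf_bound⟩
  have hkey : g + ∑ f' ∈ hFfin.toFinset, t f'
      = g' + ((f + t f) + ∑ f' ∈ hFfin.toFinset.erase f, t f') := by
    rw [← Finset.add_sum_erase _ t (hFfin.mem_toFinset.2 hfF), hf_def]
    abel
  rw [hkey]
  have hin : (f + t f) + ∑ f' ∈ hFfin.toFinset.erase f, t f' ∈ S := by
    rcases (hFfin.toFinset.erase f).eq_empty_or_nonempty with he | hne
    · rw [he, Finset.sum_empty, add_zero]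
      exact htF f hfF
    · exact S.add_mem (htF f hfF) (sum_mem_addSubsemigroup S hne fun f' _ => ht f')
  by_cases hk0 : ∃ a ∈ A, k a ≠ 0
  · refine S.add_mem ?_ hin
    have := hcombo_mem k hk0
    rw [hg']
    simpa only [natCast_zsmul] using this
  · push_neg at hk0
    have hg'0 : g' = 0 := by
      rw [hg']
      exact Finset.sum_eq_zero fun a ha => by rw [hk0 a ha]; simp
    rw [hg'0, zero_add]
    exact hin
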